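/- For every integer m ≥ 1, the series Σ_{n=0}^∞ (2ⁿ/m)·2^{−2ⁿ/m} converges and satisfies Σ_{n=0}^∞ (2ⁿ/m)·2^{−2ⁿ/m} ≤ ⌈log(3m)/log 2⌉ + (log 2)^{−2}. -/

import Mathlib

open Real

private lemma exp_ge_e_mul (t : ℝ) : Real.exp 1 * t ≤ Real.exp t := by
  have h := Real.add_one_le_exp (t - 1)
  have hs : Real.exp (t - 1) = Real.exp t / Real.exp 1 := Real.exp_sub t 1
  have hpos : (0:ℝ) < Real.exp 1 := Real.exp_pos 1
  rw [hs] at h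
  have : t ≤ Real.exp t / Real.exp 1 := by linarith
  calc Real.exp 1 * t ≤ Real.exp 1 * (Real.exp t / Real.exp 1) := by
        exact mul_le_mul_of_nonneg_left this hpos.le
    _ = Real.exp t := by field_simp

private lemma self_le_two_rpow (x : ℝ) (hx : 0 ≤ x) : x ≤ (2:ℝ) ^ x := by
  have h2 : (2:ℝ) ^ x = Real.exp (Real.log 2 * x) := Real.rpow_def_of_pos (by norm_num) x
  have hkey := exp_ge_e_mul (Real.log 2 * x)
  have he : (2.7182818283 : ℝ) < Real.exp 1 := Real.exp_one_gt_d9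
  have hl : (0.6931471803 : ℝ) < Real.log 2 := Real.log_two_gt_d9
  rw [h2]
  nlinarith [mul_nonneg (Real.log_nonneg (by norm_num : (1:ℝ) ≤ 2)) hx]

private lemma aux2 (x : ℝ) (hx : 0 ≤ x) : x * (2:ℝ) ^ (-x) ≤ 1 := by
  have hp : (0:ℝ) < (2:ℝ) ^ x := Real.rpow_pos_of_pos (by norm_num) x
  have h1 : x * (2:ℝ) ^ (-x) ≤ (2:ℝ) ^ x * (2:ℝ) ^ (-x) := by
    exact mul_le_mul_of_nonneg_right (self_le_two_rpow x hx)
      (Real.rpow_pos_of_pos (by norm_num) _).le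
  have h2 : (2:ℝ) ^ x * (2:ℝ) ^ (-x) = 1 := by
    rw [← Real.rpow_add (by norm_num : (0:ℝ) < 2)]; simp
  linarith

private lemma x_two_rpow_le (x : ℝ) (hx : 3 ≤ x) : x * (2:ℝ) ^ (-x) ≤ 3 / 8 := by
  have hl : (0.6931471803 : ℝ) < Real.log 2 := Real.log_two_gt_d9
  -- show (8/3) * x ≤ 2 ^ x
  have hstep : (8/3 : ℝ) * x ≤ (2:ℝ) ^ x := by
    have hx3 : x = 3 + (x - 3) := by ring
    have hsplit : (2:ℝ) ^ x = (2:ℝ) ^ (3:ℝ) * (2:ℝ) ^ (x - 3) := by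
      rw [← Real.rpow_add (by norm_num : (0:ℝ) < 2)]; ring_nf
    have h8 : (2:ℝ) ^ (3:ℝ) = 8 := by
      rw [show (3:ℝ) = ((3:ℕ):ℝ) by norm_num, Real.rpow_natCast]; norm_num
    have hexp : (2:ℝ) ^ (x - 3) = Real.exp (Real.log 2 * (x - 3)) :=
      Real.rpow_def_of_pos (by norm_num) _
    have hlin : Real.log 2 * (x - 3) + 1 ≤ Real.exp (Real.log 2 * (x - 3)) :=
      Real.add_one_le_exp _
    have hge : (1:ℝ) + (x - 3) / 3 ≤ (2:ℝ) ^ (x - 3) := by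
      rw [hexp]; nlinarith
    rw [hsplit, h8]
    nlinarith
  have hp : (0:ℝ) < (2:ℝ) ^ x := Real.rpow_pos_of_pos (by norm_num) x
  have hinv : x * (2:ℝ) ^ (-x) = x / (2:ℝ) ^ x := by
    rw [Real.rpow_neg (by norm_num : (0:ℝ) ≤ 2)]; ring
  rw [hinv, div_le_iff₀ hp]
  nlinarith

/-- Tail term bound: for `x ≥ 3`, `(x·2^k)·2^{-(x·2^k)} ≤ (3/8)·(1/4)^k`. -/
private lemma aux_tail (x : ℝ) (hx : 3 ≤ x) (k : ℕ) :
    (x * 2 ^ k) * (2:ℝ) ^ (-(x * 2 ^ k)) ≤ (3/8) * (1/4:ℝ) ^ k := by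
  have hk1 : (k:ℝ) + 1 ≤ (2:ℝ) ^ k := by
    have := Nat.lt_two_pow_self (n := k)
    have : (k:ℝ) + 1 ≤ ((2^k : ℕ) : ℝ) := by exact_mod_cast this
    simpa using this
  have hxk : x + 3 * k ≤ x * 2 ^ k := by nlinarith [hx, hk1, (by positivity : (0:ℝ) ≤ (k:ℝ))]
  have hmono : (2:ℝ) ^ (-(x * 2 ^ k)) ≤ (2:ℝ) ^ (-(x + 3 * k)) := by
    apply Real.rpow_le_rpow_left_iff (by norm_num : (1:ℝ) < 2) |>.mpr
    linarith
  have hsplit : (2:ℝ) ^ (-(x + 3 * k)) = (2:ℝ) ^ (-x) * (2:ℝ) ^ (-(3 * (k:ℝ))) := by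
    rw [← Real.rpow_add (by norm_num : (0:ℝ) < 2)]; ring_nf
  have hpos2k : (0:ℝ) < (2:ℝ) ^ k := by positivity
  have hxnn : (0:ℝ) ≤ x := by linarith
  calc (x * 2 ^ k) * (2:ℝ) ^ (-(x * 2 ^ k))
      ≤ (x * 2 ^ k) * (2:ℝ) ^ (-(x + 3 * k)) := by
        exact mul_le_mul_of_nonneg_left hmono (by positivity)
    _ = (x * (2:ℝ) ^ (-x)) * ((2:ℝ) ^ k * (2:ℝ) ^ (-(3 * (k:ℝ)))) := by
        rw [hsplit]; ring
    _ ≤ (3/8) * ((2:ℝ) ^ k * (2:ℝ) ^ (-(3 * (k:ℝ)))) := by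
        apply mul_le_mul_of_nonneg_right (x_two_rpow_le x hx)
        have : (0:ℝ) < (2:ℝ) ^ (-(3 * (k:ℝ))) := Real.rpow_pos_of_pos (by norm_num) _
        positivity
    _ = (3/8) * (1/4:ℝ) ^ k := by
        congr 1
        have h1 : (2:ℝ) ^ k = (2:ℝ) ^ ((k:ℝ)) := (Real.rpow_natCast 2 k).symm
        rw [h1, ← Real.rpow_add (by norm_num : (0:ℝ) < 2)]
        have h2 : (k:ℝ) + -(3 * (k:ℝ)) = (-2 : ℝ) * k := by ring
        have hq : (2:ℝ) ^ (-2:ℝ) = 1/4 := by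
          rw [show (-2:ℝ) = ((-2:ℤ):ℝ) by norm_num, Real.rpow_intCast]; norm_num
        rw [h2, Real.rpow_mul (by norm_num : (0:ℝ) ≤ 2), hq, Real.rpow_natCast]

/-- Entropy-sum estimate from the generic chaining argument: for
every integer `m ≥ 1` the series `Σ_{n≥0} (2ⁿ/m)·2^{−2ⁿ/m}` converges and its sum
is at most `⌈log(3m)/log 2⌉ + (log 2)⁻²`. -/
theorem stmt6 (m : ℕ) (hm : 1 ≤ m) :
    Summable (fun n : ℕ => ((2:ℝ) ^ n / (m : ℝ)) * (2:ℝ) ^ (-((2:ℝ) ^ n / (m : ℝ)))) ∧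
      ∑' n : ℕ, ((2:ℝ) ^ n / (m : ℝ)) * (2:ℝ) ^ (-((2:ℝ) ^ n / (m : ℝ)))
        ≤ (⌈Real.log (3 * (m : ℝ)) / Real.log 2⌉ : ℝ) + 1 / (Real.log 2) ^ 2 := by
  have hm0 : (0:ℝ) < m := by exact_mod_cast hm
  have hL : (0:ℝ) < Real.log 2 := Real.log_pos (by norm_num)
  set f : ℕ → ℝ := fun n => ((2:ℝ) ^ n / (m : ℝ)) * (2:ℝ) ^ (-((2:ℝ) ^ n / (m : ℝ))) with hf
  set c : ℤ := ⌈Real.log (3 * (m : ℝ)) / Real.log 2⌉ with hc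
  have hm1 : (1:ℝ) ≤ m := by exact_mod_cast hm
  have h3m : (1:ℝ) ≤ 3 * m := by linarith
  have hc0 : 0 ≤ c := Int.ceil_nonneg (div_nonneg (Real.log_nonneg h3m) hL.le)
  set N : ℕ := c.toNat with hNdef
  have hNc : ((N:ℤ) : ℝ) = (c : ℝ) := by exact_mod_cast Int.toNat_of_nonneg hc0
  have hNR : ((N:ℕ) : ℝ) = (c : ℝ) := by exact_mod_cast hNc
  have hNge : Real.log (3 * (m : ℝ)) / Real.log 2 ≤ (N : ℝ) := by
    rw [hNR]; exact Int.le_ceil _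
  have h2N : 3 * (m : ℝ) ≤ (2:ℝ) ^ N := by
    have hlog : Real.log (3 * (m : ℝ)) ≤ (N : ℝ) * Real.log 2 := by
      rw [div_le_iff₀ hL] at hNge; linarith
    have := (Real.log_le_iff_le_exp (by positivity : (0:ℝ) < 3 * m)).mp hlog
    calc 3 * (m : ℝ) ≤ Real.exp ((N : ℝ) * Real.log 2) := this
      _ = (2:ℝ) ^ ((N:ℝ)) := by
          rw [Real.rpow_def_of_pos (by norm_num : (0:ℝ) < 2)]; ring_nf
      _ = (2:ℝ) ^ N := Real.rpow_natCast 2 N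
  set a : ℝ := (2:ℝ) ^ N / m with ha
  have ha3 : 3 ≤ a := by
    rw [ha, le_div_iff₀ hm0]; linarith
  have harg : ∀ k : ℕ, (2:ℝ) ^ (N + k) / (m : ℝ) = a * 2 ^ k := by
    intro k; rw [pow_add, ha]; ring
  have hshift : ∀ k : ℕ, f (N + k) = (a * 2 ^ k) * (2:ℝ) ^ (-(a * 2 ^ k)) := by
    intro k; simp only [hf, harg k]
  have hfnn : ∀ n, 0 ≤ f n := by
    intro n
    have : (0:ℝ) < (2:ℝ) ^ (-((2:ℝ) ^ n / (m : ℝ))) := Real.rpow_pos_of_pos (by norm_num) _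
    simp only [hf]; positivity
  have htail_le : ∀ k : ℕ, f (N + k) ≤ (3/8) * (1/4:ℝ) ^ k := by
    intro k; rw [hshift k]; exact aux_tail a ha3 k
  have hgeom : Summable (fun k : ℕ => (3/8) * (1/4:ℝ) ^ k) :=
    (summable_geometric_of_lt_one (by norm_num) (by norm_num)).mul_left _
  have hsum_tail : Summable (fun k => f (N + k)) :=
    Summable.of_nonneg_of_le (fun k => hfnn _) htail_le hgeom
  have hsum_tail' : Summable (fun k => f (k + N)) := by
    simpa [add_comm] using hsum_tail
  have hsumf : Summable f := (summable_nat_add_iff N).mp hsum_tail'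
  refine ⟨hsumf, ?_⟩
  have hsplit := (hsumf.sum_add_tsum_nat_add N).symm
  have hhead : ∑ i ∈ Finset.range N, f i ≤ (N : ℝ) := by
    have : ∀ i ∈ Finset.range N, f i ≤ 1 := by
      intro i _
      simp only [hf]
      exact aux2 _ (by positivity)
    calc ∑ i ∈ Finset.range N, f i ≤ ∑ _i ∈ Finset.range N, (1:ℝ) := Finset.sum_le_sum this
      _ = N := by simp
  have htail_le' : ∀ k : ℕ, f (k + N) ≤ (3/8) * (1/4:ℝ) ^ k := by
    intro k; rw [add_comm]; exact htail_le k
  have htailsum : ∑' k : ℕ, f (k + N) ≤ 1/2 := by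
    have h1 : ∑' k : ℕ, f (k + N) ≤ ∑' k : ℕ, (3/8) * (1/4:ℝ) ^ k :=
      hsum_tail'.tsum_le_tsum htail_le' hgeom
    have h2 : ∑' k : ℕ, (3/8) * (1/4:ℝ) ^ k = (3/8) * (1 - 1/4)⁻¹ := by
      rw [tsum_mul_left, tsum_geometric_of_lt_one (by norm_num) (by norm_num)]
    rw [h2] at h1; linarith
  have hlog1 : Real.log 2 < 1 := by
    have := Real.log_two_lt_d9; linarith
  have hfinal : 1/2 ≤ 1 / (Real.log 2) ^ 2 := by
    rw [div_le_div_iff₀ (by norm_num) (by positivity)]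
    nlinarith
  have : ∑' n : ℕ, f n ≤ (N : ℝ) + 1/2 := by
    rw [hsplit]; exact add_le_add hhead htailsum
  linarith [this, hfinal, hNR.le, hNR.ge]
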